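/- arXiv:2109.09868 — 4 statements merged into one kernel-verified Lean document; each statement's English description precedes it below -/
import Mathlib

section
/- (Correctness of BW-type rational interpolation.) Let $r(x) = p(x)/q(x)$ with $\deg p, \deg q \le K-1$. Let $x_0, \dots, x_N$ be distinct points in a field and let $A \subseteq \{0,\dots,N\}$ with $|A| = N-S+1$ be the available indices. Suppose $y_i$ are given values with $y_i = r(x_i)$ (and $q(x_i) \neq 0$) for all $i$ in a subset $G \subseteq A$ with $|G| \ge N-S-E+1$. Suppose $P(x), Q(x)$ are polynomials of degree at most $K+E-1$ satisfying $P(x_i) = y_i Q(x_i)$ for all $i \in A$, with $Q \neq 0$. If $N \ge 2K+2E+S-1$, then $P(x)q(x) = Q(x)p(x)$, i.e., $P/Q = p/q$ as rational functions. -/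
open Polynomial

/-- Correctness of BW-type rational interpolation: if `P,Q` of degree
`≤ K+E-1` satisfy `P(x_i) = y_i Q(x_i)` on all available indices, where the
values `y_i` agree with `r = p/q` (degrees `≤ K-1`) on at least `N-S-E+1`
indices, and `N ≥ 2K+2E+S-1`, then `P·q = Q·p`. -/
theorem stmt4 {F : Type*} [Field F] (K E S N : ℕ)
    (hK : 1 ≤ K) (hS : 1 ≤ S) (hSN : S ≤ N)
    (x : Fin (N + 1) → F) (hx : Function.Injective x)
    (y : Fin (N + 1) → F)
    (p q P Q : F[X])
    (hp : p.natDegree ≤ K - 1) (hq : q.natDegree ≤ K - 1)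
    (hP : P.natDegree ≤ K + E - 1) (hQdeg : Q.natDegree ≤ K + E - 1)
    (A G : Finset (Fin (N + 1))) (hGA : G ⊆ A)
    (hA : A.card = N - S + 1) (hG : N - S - E + 1 ≤ G.card)
    (hgood : ∀ i ∈ G, q.eval (x i) ≠ 0 ∧ y i * q.eval (x i) = p.eval (x i))
    (hPQ : ∀ i ∈ A, P.eval (x i) = y i * Q.eval (x i))
    (hQ : Q ≠ 0)
    (hN : 2 * K + 2 * E + S - 1 ≤ N) :
    P * q = Q * p := by
  classical
  have key : P * q - Q * p = 0 := by
    apply Polynomial.eq_zero_of_natDegree_lt_card_of_eval_eq_zero' _ (G.image x)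
    · intro z hz
      obtain ⟨i, hi, rfl⟩ := Finset.mem_image.mp hz
      obtain ⟨hqi, hyi⟩ := hgood i hi
      have h1 := hPQ i (hGA hi)
      simp only [eval_sub, eval_mul, h1]
      rw [← hyi]
      ring
    · rw [Finset.card_image_of_injective _ hx]
      have hdeg : (P * q - Q * p).natDegree ≤ 2 * K + E - 2 := by
        apply le_trans (natDegree_sub_le _ _)
        have h1 : (P * q).natDegree ≤ 2 * K + E - 2 :=
          le_trans (natDegree_mul_le) (by omega)
        have h2 : (Q * p).natDegree ≤ 2 * K + E - 2 :=
          le_trans (natDegree_mul_le) (by omega)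
        omega
      have : 2 * K + E - 2 < N - S - E + 1 := by omega
      omega
  exact sub_eq_zero.mp key
end

section
/- (No poles on the real line for Berrut's interpolant.) For distinct real points $x_0 < x_1 < \cdots < x_n$, the denominator polynomial $D(x) = \sum_{i=0}^n (-1)^i \prod_{k \neq i} (x - x_k)$ of Berrut's rational interpolant has no real roots. -/
open Finset

private lemma negpow_congr (a b : ℕ) (h : a % 2 = b % 2) : (-1:ℝ)^a = (-1:ℝ)^b := by
  conv_lhs => rw [← Nat.div_add_mod a 2]
  conv_rhs => rw [← Nat.div_add_mod b 2]
  simp [pow_add, pow_mul, neg_one_sq, h]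

private lemma alt_nonneg : ∀ (K : ℕ) (b : ℕ → ℝ), (∀ j, j < K → 0 < b j) →
    (∀ j, j + 1 < K → b (j + 1) < b j) → 0 ≤ ∑ j ∈ range K, (-1:ℝ)^j * b j := by
  intro K
  induction K using Nat.strong_induction_on with
  | _ K ih =>
    match K with
    | 0 => intro b _ _; simp
    | 1 => intro b hb _; simpa using (hb 0 (by omega)).le
    | (K+2) =>
      intro b hb hdec
      rw [Finset.sum_range_succ', Finset.sum_range_succ']
      have h1 : ∀ j ∈ range K, ((-1:ℝ))^(j+1+1) * b (j+1+1) = (-1)^j * b (j+2) := by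
        intro j _
        rw [show j+1+1 = j+2 from rfl, pow_add, neg_one_sq, mul_one]
      rw [Finset.sum_congr rfl h1]
      have h2 : 0 ≤ ∑ j ∈ range K, (-1:ℝ)^j * b (j+2) :=
        ih K (by omega) (fun j => b (j+2)) (fun j hj => hb _ (by omega))
          (fun j hj => hdec (j+2) (by omega))
      have h3 : b 1 < b 0 := hdec 0 (by omega)
      simp only [pow_one, pow_zero, one_mul, zero_add]
      nlinarith [h2]

private lemma alt_pos : ∀ (K : ℕ) (b : ℕ → ℝ), 0 < K → (∀ j, j < K → 0 < b j) →
    (∀ j, j + 1 < K → b (j + 1) < b j) → 0 < ∑ j ∈ range K, (-1:ℝ)^j * b j := by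
  intro K b hK hb hdec
  match K, hK with
  | 1, _ => simpa using hb 0 (by omega)
  | (K+2), _ =>
    rw [Finset.sum_range_succ', Finset.sum_range_succ']
    have h1 : ∀ j ∈ range K, ((-1:ℝ))^(j+1+1) * b (j+1+1) = (-1)^j * b (j+2) := by
      intro j _
      rw [show j+1+1 = j+2 from rfl, pow_add, neg_one_sq, mul_one]
    rw [Finset.sum_congr rfl h1]
    have h2 : 0 ≤ ∑ j ∈ range K, (-1:ℝ)^j * b (j+2) :=
      alt_nonneg K (fun j => b (j+2)) (fun j hj => hb _ (by omega))
        (fun j hj => hdec (j+2) (by omega))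
    have h3 : b 1 < b 0 := hdec 0 (by omega)
    simp only [pow_one, pow_zero, one_mul, zero_add]
    nlinarith [h2]

/-- No poles on the real line for Berrut's interpolant: the denominator
`D(x) = ∑ i (-1)^i ∏_{k≠i}(x - x_k)` has no real roots. -/
theorem stmt9 (n : ℕ) (x : Fin (n + 1) → ℝ) (hx : StrictMono x) :
    ∀ t : ℝ,
      (∑ i : Fin (n + 1), (-1 : ℝ) ^ (i : ℕ) *
        ∏ k ∈ univ.erase i, (t - x k)) ≠ 0 := by
  intro t
  by_cases hnode : ∃ j : Fin (n+1), t = x j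
  · -- t is a node: only one term survives
    obtain ⟨j, hj⟩ := hnode
    rw [Finset.sum_eq_single j]
    · apply mul_ne_zero (pow_ne_zero _ (by norm_num))
      rw [Finset.prod_ne_zero_iff]
      intro k hk
      have hkj : k ≠ j := (Finset.mem_erase.mp hk).1
      have : x k ≠ x j := fun h => hkj (hx.injective h)
      rw [hj]
      exact sub_ne_zero.mpr (Ne.symm this)
    · intro i _ hij
      apply mul_eq_zero_of_right
      exact Finset.prod_eq_zero (Finset.mem_erase.mpr ⟨hij.symm, mem_univ j⟩)
        (by rw [hj]; ring)
    · intro h; exact absurd (mem_univ j) h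
  · push_neg at hnode
    have hne : ∀ k : Fin (n+1), t ≠ x k := hnode
    classical
    set s : Finset (Fin (n+1)) := univ.filter (fun k => x k < t) with hs_def
    set m : ℕ := s.card with hm_def
    have hm : m ≤ n + 1 := by
      have := Finset.card_filter_le (univ : Finset (Fin (n+1))) (fun k => x k < t)
      simpa [hm_def, hs_def] using this
    have key : ∀ k : Fin (n+1), x k < t ↔ (k:ℕ) < m := by
      have hdc : ∀ (k k' : Fin (n+1)), k' ≤ k → k ∈ s → k' ∈ s := by
        intro k k' hle hk
        rw [hs_def, Finset.mem_filter] at hk ⊢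
        exact ⟨mem_univ _, lt_of_le_of_lt (hx.monotone hle) hk.2⟩
      rcases s.eq_empty_or_nonempty with he | hne'
      · intro k
        constructor
        · intro h
          have hk : k ∈ s := by rw [hs_def, Finset.mem_filter]; exact ⟨mem_univ _, h⟩
          rw [he] at hk
          exact absurd hk (Finset.notMem_empty k)
        · intro h
          rw [hm_def, he] at h
          simp at h
      · have hmem : ∀ k, k ∈ s ↔ k ≤ s.max' hne' := by
          intro k
          constructor
          · exact fun h => s.le_max' k h
          · intro h
            exact hdc (s.max' hne') k h (s.max'_mem hne')
        have hsI : s = Finset.Iic (s.max' hne') := by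
          ext k
          rw [hmem k, Finset.mem_Iic]
        have hcard : m = ((s.max' hne' : Fin (n+1)) : ℕ) + 1 := by
          have h2 := congrArg Finset.card hsI
          rw [Fin.card_Iic] at h2
          exact hm_def.trans h2
        intro k
        have h1 : x k < t ↔ k ∈ s := by
          rw [hs_def, Finset.mem_filter]
          exact ⟨fun h => ⟨mem_univ _, h⟩, fun h => h.2⟩
        rw [h1, hmem k, hcard, Fin.le_def]
        omega
    have hgt : ∀ k : Fin (n+1), ¬((k:ℕ) < m) → t < x k := by
      intro k hk
      have h1 : ¬ x k < t := fun h => hk ((key k).mp h)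
      exact lt_of_le_of_ne (not_lt.mp h1) (hne k)
    set P : ℝ := ∏ k : Fin (n+1), |t - x k| with hP_def
    have hPpos : 0 < P := Finset.prod_pos
      (fun k _ => abs_pos.mpr (sub_ne_zero.mpr (hne k)))
    have hGP : ∀ i : Fin (n+1), (∏ k ∈ univ.erase i, |t - x k|) * |t - x i| = P :=
      fun i => Finset.prod_erase_mul _ _ (mem_univ i)
    have habs_lt : ∀ i : Fin (n+1), (i:ℕ) < m →
        (∏ k ∈ univ.erase i, |t - x k|) = P / (t - x i) := by
      intro i hi
      have h0 : (0:ℝ) < t - x i := sub_pos.mpr ((key i).mpr hi)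
      have h1 := hGP i
      rw [abs_of_pos h0] at h1
      rw [eq_div_iff h0.ne']
      exact h1
    have habs_ge : ∀ i : Fin (n+1), ¬((i:ℕ) < m) →
        (∏ k ∈ univ.erase i, |t - x k|) = P / (x i - t) := by
      intro i hi
      have h0 : (0:ℝ) < x i - t := sub_pos.mpr (hgt i hi)
      have h1 := hGP i
      rw [abs_of_neg (by linarith : t - x i < 0)] at h1
      rw [eq_div_iff h0.ne']
      rw [← h1]; ring
    have hsgn_univ :
        (∏ k : Fin (n+1), (if (k:ℕ) < m then (1:ℝ) else -1)) = (-1)^(n+1-m) := by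
      rw [Finset.prod_ite (fun _ => (1:ℝ)) (fun _ => (-1:ℝ))]
      rw [Finset.prod_const_one, Finset.prod_const, one_mul]
      congr 1
      have h1 : (univ.filter (fun k : Fin (n+1) => (k:ℕ) < m)).card = m := by
        rw [hm_def, hs_def]
        congr 1
        ext k
        simp [key k]
        exact Iff.rfl
      have h2 := Finset.card_filter_add_card_filter_not
        (s := (univ : Finset (Fin (n+1)))) (p := fun k => (k:ℕ) < m)
      rw [h1] at h2
      simp only [Finset.card_univ, Fintype.card_fin] at h2
      omega
    have hsign : ∀ i : Fin (n+1), (∏ k ∈ univ.erase i, (t - x k)) =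
        (-1:ℝ)^(n+1-m) * ((if (i:ℕ) < m then (1:ℝ) else -1) *
          ∏ k ∈ univ.erase i, |t - x k|) := by
      intro i
      have h1 : ∀ k ∈ univ.erase i,
          t - x k = (if (k:ℕ) < m then (1:ℝ) else -1) * |t - x k| := by
        intro k _
        by_cases hk : (k:ℕ) < m
        · rw [if_pos hk, one_mul, abs_of_pos (sub_pos.mpr ((key k).mpr hk))]
        · rw [if_neg hk, abs_of_neg (by have := hgt k hk; linarith : t - x k < 0)]
          ring
      rw [Finset.prod_congr rfl h1, Finset.prod_mul_distrib]
      have h2 := Finset.prod_erase_mul univ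
        (fun k : Fin (n+1) => (if (k:ℕ) < m then (1:ℝ) else -1)) (mem_univ i)
      rw [hsgn_univ] at h2
      have h3 : (∏ k ∈ univ.erase i, (if (k:ℕ) < m then (1:ℝ) else -1)) =
          (-1:ℝ)^(n+1-m) * (if (i:ℕ) < m then (1:ℝ) else -1) := by
        by_cases hi : (i:ℕ) < m
        · simp only [hi, if_true, mul_one] at h2 ⊢
          exact h2
        · simp only [hi, if_false, mul_neg_one] at h2 ⊢
          linarith
      rw [h3]; ring
    set φ : ℕ → ℝ := fun j => if h : j < n+1 then
        (-1:ℝ)^j * ((-1:ℝ)^(n+1-m) * ((if j < m then (1:ℝ) else -1) *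
          ∏ k ∈ univ.erase (⟨j, h⟩ : Fin (n+1)), |t - x k|)) else 0 with hφ_def
    have hD : (∑ i : Fin (n+1), (-1:ℝ)^(i:ℕ) * ∏ k ∈ univ.erase i, (t - x k)) =
        ∑ j ∈ range (n+1), φ j := by
      rw [← Fin.sum_univ_eq_sum_range φ (n+1)]
      apply Finset.sum_congr rfl
      intro i _
      rw [hsign i, hφ_def]
      simp only [dif_pos i.isLt, Fin.eta]
    have hsub : ∀ j : ℕ, m - 1 - j < n + 1 := fun j => by omega
    set c : ℕ → ℝ := fun j => P / (t - x ⟨m - 1 - j, hsub j⟩) with hc_def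
    set d : ℕ → ℝ := fun j => if h : m + j < n + 1 then P / (x ⟨m + j, h⟩ - t) else 0
      with hd_def
    have claim1 : ∀ j, j < m → (-1:ℝ)^n * φ (m - 1 - j) = (-1:ℝ)^j * c j := by
      intro j hj
      have hlt : m - 1 - j < n + 1 := hsub j
      have him : m - 1 - j < m := by omega
      rw [hφ_def, hc_def]
      simp only [dif_pos hlt, if_pos him]
      rw [habs_lt ⟨m-1-j, hlt⟩ him, one_mul]
      have hpow : (-1:ℝ)^n * ((-1:ℝ)^(m-1-j) * (-1:ℝ)^(n+1-m)) = (-1:ℝ)^j := by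
        rw [← pow_add, ← pow_add]
        exact negpow_congr _ _ (by omega)
      calc (-1:ℝ)^n * ((-1:ℝ)^(m-1-j) * ((-1:ℝ)^(n+1-m) *
              (P / (t - x ⟨m-1-j, hlt⟩))))
          = ((-1:ℝ)^n * ((-1:ℝ)^(m-1-j) * (-1:ℝ)^(n+1-m))) *
              (P / (t - x ⟨m-1-j, hlt⟩)) := by ring
        _ = (-1:ℝ)^j * (P / (t - x ⟨m-1-j, hlt⟩)) := by rw [hpow]
    have claim2 : ∀ j, j < n + 1 - m → (-1:ℝ)^n * φ (m + j) = (-1:ℝ)^j * d j := by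
      intro j hj
      have hlt : m + j < n + 1 := by omega
      have him : ¬ (m + j < m) := by omega
      rw [hφ_def, hd_def]
      simp only [dif_pos hlt, if_neg him]
      rw [habs_ge ⟨m+j, hlt⟩ him]
      have hpow : (-1:ℝ)^n * ((-1:ℝ)^(m+j) * ((-1:ℝ)^(n+1-m) * (-1:ℝ))) = (-1:ℝ)^j := by
        calc (-1:ℝ)^n * ((-1:ℝ)^(m+j) * ((-1:ℝ)^(n+1-m) * (-1:ℝ)))
            = (-1:ℝ)^(n+(m+j)+(n+1-m)+1) := by
              rw [pow_add, pow_add, pow_add, pow_one]; ring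
          _ = (-1:ℝ)^j := negpow_congr _ _ (by omega)
      calc (-1:ℝ)^n * ((-1:ℝ)^(m+j) * ((-1:ℝ)^(n+1-m) *
              (-1 * (P / (x ⟨m+j, hlt⟩ - t)))))
          = ((-1:ℝ)^n * ((-1:ℝ)^(m+j) * ((-1:ℝ)^(n+1-m) * (-1:ℝ)))) *
              (P / (x ⟨m+j, hlt⟩ - t)) := by ring
        _ = (-1:ℝ)^j * (P / (x ⟨m+j, hlt⟩ - t)) := by rw [hpow]
    have hsplit : (-1:ℝ)^n * (∑ i : Fin (n+1), (-1:ℝ)^(i:ℕ) *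
          ∏ k ∈ univ.erase i, (t - x k)) =
        (∑ j ∈ range m, (-1:ℝ)^j * c j) + ∑ j ∈ range (n+1-m), (-1:ℝ)^j * d j := by
      rw [hD]
      conv_lhs => rw [show n + 1 = m + (n+1-m) from by omega, Finset.sum_range_add]
      rw [mul_add, Finset.mul_sum, Finset.mul_sum]
      congr 1
      · rw [← Finset.sum_range_reflect (fun j => (-1:ℝ)^n * φ j) m]
        exact Finset.sum_congr rfl (fun j hj => claim1 j (mem_range.mp hj))
      · exact Finset.sum_congr rfl (fun j hj => claim2 j (mem_range.mp hj))
    have hcpos : ∀ j, j < m → 0 < c j := by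
      intro j hj
      rw [hc_def]
      exact div_pos hPpos (sub_pos.mpr ((key _).mpr (by simpa using by omega)))
    have hcdec : ∀ j, j + 1 < m → c (j+1) < c j := by
      intro j hj
      rw [hc_def]
      have h1 : x (⟨m-1-(j+1), hsub (j+1)⟩ : Fin (n+1)) < x ⟨m-1-j, hsub j⟩ :=
        hx (by simp [Fin.mk_lt_mk]; omega)
      have h2 : (0:ℝ) < t - x (⟨m-1-j, hsub j⟩ : Fin (n+1)) :=
        sub_pos.mpr ((key _).mpr (by simpa using by omega))
      exact div_lt_div_of_pos_left hPpos h2 (by linarith)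
    have hdpos : ∀ j, j < n + 1 - m → 0 < d j := by
      intro j hj
      have hlt : m + j < n + 1 := by omega
      rw [hd_def]
      simp only [dif_pos hlt]
      exact div_pos hPpos (sub_pos.mpr (hgt _ (by simpa using by omega)))
    have hddec : ∀ j, j + 1 < n + 1 - m → d (j+1) < d j := by
      intro j hj
      have hlt1 : m + (j+1) < n + 1 := by omega
      have hlt2 : m + j < n + 1 := by omega
      rw [hd_def]
      simp only [dif_pos hlt1, dif_pos hlt2]
      have h1 : x (⟨m+j, hlt2⟩ : Fin (n+1)) < x ⟨m+(j+1), hlt1⟩ :=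
        hx (by simp [Fin.mk_lt_mk])
      have h2 : (0:ℝ) < x (⟨m+j, hlt2⟩ : Fin (n+1)) - t :=
        sub_pos.mpr (hgt _ (by simpa using by omega))
      exact div_lt_div_of_pos_left hPpos h2 (by linarith)
    have hfinal : 0 < (-1:ℝ)^n * (∑ i : Fin (n+1), (-1:ℝ)^(i:ℕ) *
        ∏ k ∈ univ.erase i, (t - x k)) := by
      rw [hsplit]
      rcases Nat.eq_zero_or_pos m with hm0 | hm1
      · have hB : 0 < ∑ j ∈ range (n+1-m), (-1:ℝ)^j * d j :=
          alt_pos _ d (by omega) hdpos hddec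
        have hA : 0 ≤ ∑ j ∈ range m, (-1:ℝ)^j * c j := alt_nonneg _ c hcpos hcdec
        linarith
      · have hA : 0 < ∑ j ∈ range m, (-1:ℝ)^j * c j := alt_pos _ c hm1 hcpos hcdec
        have hB : 0 ≤ ∑ j ∈ range (n+1-m), (-1:ℝ)^j * d j :=
          alt_nonneg _ d hdpos hddec
        linarith
    intro h0
    rw [h0, mul_zero] at hfinal
    exact lt_irrefl _ hfinal
end

section
/- For $x$ strictly between consecutive nodes, i.e., $x_{j} < x < x_{j+1}$ for some $j$, the sum $\sum_{i=0}^n \frac{(-1)^i}{x - x_i}$ is nonzero. In fact, the terms can be paired so that the sum has the same sign as $(-1)^j$ (up to a fixed convention), hence is nonzero. -/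
lemma altpos : ∀ m : ℕ, ∀ a : ℕ → ℝ, 0 < m → (∀ k, k < m → 0 < a k) →
    (∀ k, k + 1 < m → a (k+1) < a k) →
    0 < ∑ k ∈ Finset.range m, (-1:ℝ)^k * a k := by
  intro m
  induction m using Nat.strong_induction_on with
  | _ m ih =>
    intro a hm hpos hmono
    match m with
    | 1 => simpa using hpos 0 (by norm_num)
    | (m+2) =>
      have h1 : ∑ k ∈ Finset.range (m+2), (-1:ℝ)^k * a k
          = (∑ k ∈ Finset.range m, (-1:ℝ)^k * a (k+2)) + (a 0 - a 1) := by
        rw [Finset.sum_range_succ' (fun k => (-1:ℝ)^k * a k) (m+1),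
            Finset.sum_range_succ' (fun k => (-1:ℝ)^(k+1) * a (k+1)) m]
        simp [pow_succ]
        ring
      rw [h1]
      have h01 : 0 < a 0 - a 1 := by
        have := hmono 0 (by omega)
        linarith
      rcases Nat.eq_zero_or_pos m with hm0 | hm0
      · subst hm0; simpa using h01
      · have := ih m (by omega) (fun k => a (k+2)) hm0
          (fun k hk => hpos (k+2) (by omega)) (fun k hk => hmono (k+2) (by omega))
        linarith

/-- For `x` strictly between consecutive nodes `x_j < x < x_{j+1}`, the sum
`∑ i (-1)^i / (x - x_i)` is nonzero. -/
theorem stmt10 (n : ℕ) (x : Fin (n + 1) → ℝ) (hx : StrictMono x)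
    (j : ℕ) (hj : j + 1 ≤ n) (t : ℝ)
    (h1 : x ⟨j, by omega⟩ < t) (h2 : t < x ⟨j + 1, by omega⟩) :
    (∑ i : Fin (n + 1), (-1 : ℝ) ^ (i : ℕ) / (t - x i)) ≠ 0 := by
  set y : ℕ → ℝ := fun i => x ⟨min i n, by omega⟩ with hy_def
  have hyx : ∀ i : Fin (n+1), y ↑i = x i := by
    intro i
    have : min (↑i) n = ↑i := Nat.min_eq_left (Nat.lt_succ_iff.mp i.isLt)
    simp only [hy_def, this]
  have hymono : ∀ a b : ℕ, a < b → b ≤ n → y a < y b := by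
    intro a b hab hb
    apply hx
    rw [Fin.mk_lt_mk]
    omega
  have hyj : y j < t := by
    have : min j n = j := Nat.min_eq_left (by omega)
    simpa only [hy_def, this] using h1
  have hyj1 : t < y (j+1) := by
    have : min (j+1) n = j+1 := Nat.min_eq_left (by omega)
    simpa only [hy_def, this] using h2
  have hpos1 : ∀ i, i ≤ j → 0 < t - y i := by
    intro i hi
    rcases eq_or_lt_of_le hi with h | h
    · subst h; linarith
    · have := hymono i j h (by omega); linarith
  have hpos2 : ∀ i, j + 1 ≤ i → i ≤ n → 0 < y i - t := by
    intro i hi hi'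
    rcases eq_or_lt_of_le hi with h | h
    · subst h; linarith
    · have := hymono (j+1) i h hi'; linarith
  -- rewrite as range sum
  have hS : (∑ i : Fin (n + 1), (-1 : ℝ) ^ (i : ℕ) / (t - x i))
      = ∑ i ∈ Finset.range (n+1), (-1:ℝ)^i / (t - y i) := by
    rw [← Fin.sum_univ_eq_sum_range (fun i => (-1:ℝ)^i / (t - y i)) (n+1)]
    exact Finset.sum_congr rfl fun i _ => by rw [hyx i]
  have hsplit : ∑ i ∈ Finset.range (n+1), (-1:ℝ)^i / (t - y i)
      = (∑ i ∈ Finset.range (j+1), (-1:ℝ)^i / (t - y i))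
        + ∑ m ∈ Finset.range (n-j), (-1:ℝ)^(j+1+m) / (t - y (j+1+m)) := by
    rw [show n+1 = (j+1) + (n-j) by omega, Finset.sum_range_add]
  -- first block
  have hA : 0 < (-1:ℝ)^j * ∑ i ∈ Finset.range (j+1), (-1:ℝ)^i / (t - y i) := by
    rw [← Finset.sum_range_reflect (fun i => (-1:ℝ)^i / (t - y i)) (j+1),
        Finset.mul_sum]
    have : ∀ k ∈ Finset.range (j+1),
        (-1:ℝ)^j * ((-1:ℝ)^(j+1-1-k) / (t - y (j+1-1-k)))
          = (-1:ℝ)^k * (1 / (t - y (j-k))) := by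
      intro k hk
      rw [Finset.mem_range] at hk
      have hjk : j + 1 - 1 - k = j - k := by omega
      rw [hjk]
      have hpow : (-1:ℝ)^j * (-1:ℝ)^(j-k) = (-1:ℝ)^k := by
        rw [← pow_add, show j + (j-k) = 2*(j-k) + k by omega, pow_add, pow_mul]
        norm_num
      rw [div_eq_mul_one_div, ← mul_assoc, hpow]
    rw [Finset.sum_congr rfl this]
    apply altpos (j+1) (fun k => 1 / (t - y (j-k))) (by omega)
    · intro k hk
      exact one_div_pos.mpr (hpos1 (j-k) (by omega))
    · intro k hk
      have hd1 : 0 < t - y (j - (k+1)) := hpos1 _ (by omega)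
      have hd2 : 0 < t - y (j - k) := hpos1 _ (by omega)
      have hlt := hymono (j - (k+1)) (j - k) (by omega) (by omega)
      exact one_div_lt_one_div_of_lt hd2 (by linarith)
  -- second block
  have hB : 0 < (-1:ℝ)^j * ∑ m ∈ Finset.range (n-j), (-1:ℝ)^(j+1+m) / (t - y (j+1+m)) := by
    rw [Finset.mul_sum]
    have : ∀ m ∈ Finset.range (n-j),
        (-1:ℝ)^j * ((-1:ℝ)^(j+1+m) / (t - y (j+1+m)))
          = (-1:ℝ)^m * (1 / (y (j+1+m) - t)) := by
      intro m hm
      have hpow : (-1:ℝ)^j * (-1:ℝ)^(j+1+m) = -(-1:ℝ)^m := by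
        rw [← pow_add, show j + (j+1+m) = 2*j + 1 + m by omega, pow_add, pow_add, pow_mul]
        norm_num
      rw [div_eq_mul_one_div, ← mul_assoc, hpow,
          show y (j+1+m) - t = -(t - y (j+1+m)) by ring, one_div_neg_eq_neg_one_div]
      ring
    rw [Finset.sum_congr rfl this]
    apply altpos (n-j) (fun m => 1 / (y (j+1+m) - t)) (by omega)
    · intro m hm
      exact one_div_pos.mpr (hpos2 (j+1+m) (by omega) (by omega))
    · intro m hm
      have hd1 : 0 < y (j+1+(m+1)) - t := hpos2 _ (by omega) (by omega)
      have hd2 : 0 < y (j+1+m) - t := hpos2 _ (by omega) (by omega)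
      have hlt := hymono (j+1+m) (j+1+(m+1)) (by omega) (by omega)
      exact one_div_lt_one_div_of_lt hd2 (by linarith)
  intro h0
  rw [hS, hsplit] at h0
  have : 0 < (-1:ℝ)^j * ((∑ i ∈ Finset.range (j+1), (-1:ℝ)^i / (t - y i))
        + ∑ m ∈ Finset.range (n-j), (-1:ℝ)^(j+1+m) / (t - y (j+1+m))) := by
    rw [mul_add]; exact add_pos hA hB
  rw [h0, mul_zero] at this
  exact lt_irrefl 0 this
end

section
/- (Error identifiability bound.) Let $r = p/q$ with $\deg p, \deg q \le K-1$ and suppose values $y_i$ at $M$ distinct points satisfy $y_i = r(x_i)$ except on a set of at most $E$ indices. If $M \ge 2K + 2E - 1$, then the rational function $r$ (as an equivalence class $p/q$) is uniquely determined by the data $(x_i, y_i)$: any other rational function $r' = p'/q'$ with degrees at most $K-1$ consistent with the data outside a set of at most $E$ indices must equal $r$. -/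
open Polynomial

/-- Error identifiability bound: values `y_i` at `M ≥ 2K+2E-1` distinct
points determine a rational function of numerator/denominator degree at most
`K-1` uniquely, even if up to `E` of the values are corrupted: any two such
rational functions each consistent with the data outside at most `E` indices
must coincide. -/
theorem stmt16 {F : Type*} [Field F] (K E M : ℕ) (hK : 1 ≤ K)
    (hM : 2 * K + 2 * E - 1 ≤ M)
    (x : Fin M → F) (hx : Function.Injective x) (y : Fin M → F)
    (p q p' q' : F[X])
    (hp : p.natDegree ≤ K - 1) (hq : q.natDegree ≤ K - 1)
    (hp' : p'.natDegree ≤ K - 1) (hq' : q'.natDegree ≤ K - 1)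
    (hqne : ∀ i, q.eval (x i) ≠ 0) (hq'ne : ∀ i, q'.eval (x i) ≠ 0)
    (B B' : Finset (Fin M)) (hB : B.card ≤ E) (hB' : B'.card ≤ E)
    (hfit : ∀ i, i ∉ B → y i = p.eval (x i) / q.eval (x i))
    (hfit' : ∀ i, i ∉ B' → y i = p'.eval (x i) / q'.eval (x i)) :
    p * q' = p' * q := by
  classical
  set S : Finset (Fin M) := (B ∪ B')ᶜ with hS
  have hScard : 2 * K - 1 ≤ S.card := by
    have h1 : (B ∪ B').card ≤ 2 * E := by
      calc (B ∪ B').card ≤ B.card + B'.card := Finset.card_union_le _ _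
        _ ≤ 2 * E := by omega
    have h2 : S.card = M - (B ∪ B').card := by
      rw [hS, Finset.card_compl, Fintype.card_fin]
    have h3 : (B ∪ B').card ≤ M := (Finset.card_le_card (Finset.subset_univ _)).trans
      (by simp)
    omega
  have key : ∀ i ∈ S, (p * q' - p' * q).eval (x i) = 0 := by
    intro i hi
    simp only [hS, Finset.mem_compl, Finset.mem_union, not_or] at hi
    have h1 := hfit i hi.1
    have h2 := hfit' i hi.2
    have := hqne i
    have := hq'ne i
    have : p.eval (x i) / q.eval (x i) = p'.eval (x i) / q'.eval (x i) := by
      rw [← h1, ← h2]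
    field_simp at this
    simp [eval_mul, this]
    ring
  have hzero : p * q' - p' * q = 0 := by
    apply Polynomial.eq_zero_of_natDegree_lt_card_of_eval_eq_zero' _ (S.image x)
    · intro z hz
      obtain ⟨i, hi, rfl⟩ := Finset.mem_image.mp hz
      exact key i hi
    · rw [Finset.card_image_of_injective _ hx]
      calc (p * q' - p' * q).natDegree
          ≤ max (p * q').natDegree (p' * q).natDegree := natDegree_sub_le _ _
        _ ≤ 2 * K - 2 := by
            apply max_le
            · exact (natDegree_mul_le).trans (by omega)
            · exact (natDegree_mul_le).trans (by omega)
        _ < S.card := by omega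
  linear_combination hzero
end
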